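/- Let G be a finite simple graph with vertex set {v_1, ..., v_n} and m edges, and let H_G be the graph constructed as follows: the vertex set of H_G contains, for each i, two adjacent vertices v_i and v_i' joined by an edge; the edges of G themselves are not included; instead, for each edge v_i v_j of G, one adds six pairwise internally disjoint paths, each with four new internal vertices (so each path has five edges): three such paths from v_i to v_j' and three such paths from v_i' to v_j, all internal vertices being new and distinct across all paths. Then rho_e^o(H_G) = 12m + alpha(G). -/

import Mathlib

open scoped Classical

variable {V : Type*}

/-- Two edges `e₁, e₂` have a common edge in `G` if some edge of `G`, different from both,
joins an endvertex of `e₁` to an endvertex of `e₂`. -/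
def HasCommonEdge (G : SimpleGraph V) (e₁ e₂ : Sym2 V) : Prop :=
  ∃ x y : V, x ∈ e₁ ∧ y ∈ e₂ ∧ G.Adj x y ∧ s(x, y) ≠ e₁ ∧ s(x, y) ≠ e₂

/-- `B` is an edge open packing set of `G`: a set of edges of `G` no two distinct members
of which have a common edge in `G`. -/
def IsEOP (G : SimpleGraph V) (B : Set (Sym2 V)) : Prop :=
  B ⊆ G.edgeSet ∧ ∀ e₁ ∈ B, ∀ e₂ ∈ B, e₁ ≠ e₂ → ¬ HasCommonEdge G e₁ e₂

/-- The edge open packing number of `G`: the maximum cardinality of an EOP set of `G`. -/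
noncomputable def eopNum (G : SimpleGraph V) : ℕ :=
  sSup {n | ∃ B : Set (Sym2 V), IsEOP G B ∧ B.ncard = n}

/-- The independence number of `G`. -/
noncomputable def indepNum (G : SimpleGraph V) : ℕ :=
  sSup {n | ∃ I : Set V, (∀ a ∈ I, ∀ b ∈ I, ¬ G.Adj a b) ∧ I.ncard = n}

/-- The base (asymmetric) adjacency relation of the graph `H_G`: for each vertex `v` of `G`
there are two vertices `v = Sum.inl (v, 0)` and `v' = Sum.inl (v, 1)` joined by an edge, and
for every ordered adjacent pair `(a, b)` of `G` (so each edge of `G` yields six paths, three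
in each direction) and each `p : Fin 3` there is a path with five edges from `(a, 0)` to
`(b, 1)` whose four internal vertices `Sum.inr (⟨(a,b),_⟩, p, t)`, `t : Fin 4`, are new and
distinct across all paths. The edges of `G` themselves are not included. -/
def HGRel (G : SimpleGraph V) :
    ((V × Fin 2) ⊕ ({p : V × V // G.Adj p.1 p.2} × Fin 3 × Fin 4)) →
    ((V × Fin 2) ⊕ ({p : V × V // G.Adj p.1 p.2} × Fin 3 × Fin 4)) → Prop :=
  fun x y =>
    (∃ v : V, x = Sum.inl (v, 0) ∧ y = Sum.inl (v, 1)) ∨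
    (∃ (q : {p : V × V // G.Adj p.1 p.2}) (p : Fin 3),
      (x = Sum.inl (q.1.1, 0) ∧ y = Sum.inr (q, p, 0)) ∨
      (∃ t : Fin 3, x = Sum.inr (q, p, t.castSucc) ∧ y = Sum.inr (q, p, t.succ)) ∨
      (x = Sum.inr (q, p, 3) ∧ y = Sum.inl (q.1.2, 1)))

/-- The graph `H_G`: the symmetrization of `HGRel G`. -/
def HG (G : SimpleGraph V) :
    SimpleGraph ((V × Fin 2) ⊕ ({p : V × V // G.Adj p.1 p.2} × Fin 3 × Fin 4)) where
  Adj x y := x ≠ y ∧ (HGRel G x y ∨ HGRel G y x)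
  symm := ⟨fun x y h => ⟨fun he => h.1 he.symm, h.2.symm⟩⟩
  loopless := ⟨fun x h => h.1 rfl⟩

-- ===== auxiliary development =====
namespace EOP14

abbrev Q (G : SimpleGraph V) := {p : V × V // G.Adj p.1 p.2}
abbrev Vtx (G : SimpleGraph V) := (V × Fin 2) ⊕ (Q G × Fin 3 × Fin 4)

variable (G : SimpleGraph V)

def ov (v : V) (i : Fin 2) : Vtx G := Sum.inl (v, i)
def rv (q : Q G) (p : Fin 3) (t : Fin 4) : Vtx G := Sum.inr (q, p, t)
def KE (v : V) : Sym2 (Vtx G) := s(ov G v 0, ov G v 1)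
def PE (q : Q G) (p : Fin 3) : Fin 5 → Sym2 (Vtx G) :=
  ![s(ov G q.1.1 0, rv G q p 0), s(rv G q p 0, rv G q p 1), s(rv G q p 1, rv G q p 2),
    s(rv G q p 2, rv G q p 3), s(rv G q p 3, ov G q.1.2 1)]

lemma KE_inj {v w : V} (h : KE G v = KE G w) : v = w := by
  simp [KE, ov, Sym2.eq_iff, Prod.ext_iff] at h
  tauto

lemma KE_ne_PE (v : V) (q : Q G) (p : Fin 3) (i : Fin 5) : KE G v ≠ PE G q p i := by
  fin_cases i <;> simp [KE, PE, ov, rv, Sym2.eq_iff]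

lemma PE_inj {q q' : Q G} {p p' : Fin 3} {i i' : Fin 5}
    (h : PE G q p i = PE G q' p' i') : q = q' ∧ p = p' ∧ i = i' := by
  fin_cases i <;> fin_cases i' <;>
    simp_all [PE, ov, rv, Sym2.eq_iff, Prod.ext_iff] <;> tauto

lemma KE_mem (v : V) : KE G v ∈ (HG G).edgeSet := by
  rw [KE, SimpleGraph.mem_edgeSet]
  exact ⟨by simp [ov], Or.inl (Or.inl ⟨v, rfl, rfl⟩)⟩

lemma PE_mem (q : Q G) (p : Fin 3) (i : Fin 5) : PE G q p i ∈ (HG G).edgeSet := by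
  fin_cases i
  · show s(ov G q.1.1 0, rv G q p 0) ∈ _
    exact (SimpleGraph.mem_edgeSet (HG G)).mpr ⟨by simp [ov, rv], Or.inl (Or.inr ⟨q, p, Or.inl ⟨rfl, rfl⟩⟩)⟩
  · show s(rv G q p 0, rv G q p 1) ∈ _
    exact (SimpleGraph.mem_edgeSet (HG G)).mpr ⟨by simp [rv], Or.inl (Or.inr ⟨q, p, Or.inr (Or.inl ⟨0, rfl, rfl⟩)⟩)⟩
  · show s(rv G q p 1, rv G q p 2) ∈ _
    exact (SimpleGraph.mem_edgeSet (HG G)).mpr ⟨by simp [rv], Or.inl (Or.inr ⟨q, p, Or.inr (Or.inl ⟨1, rfl, rfl⟩)⟩)⟩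
  · show s(rv G q p 2, rv G q p 3) ∈ _
    exact (SimpleGraph.mem_edgeSet (HG G)).mpr ⟨by simp [rv], Or.inl (Or.inr ⟨q, p, Or.inr (Or.inl ⟨2, rfl, rfl⟩)⟩)⟩
  · show s(rv G q p 3, ov G q.1.2 1) ∈ _
    exact (SimpleGraph.mem_edgeSet (HG G)).mpr ⟨by simp [ov, rv], Or.inl (Or.inr ⟨q, p, Or.inr (Or.inr ⟨rfl, rfl⟩)⟩)⟩

lemma edge_cases {e : Sym2 (Vtx G)} (he : e ∈ (HG G).edgeSet) :
    (∃ v, e = KE G v) ∨ ∃ q p i, e = PE G q p i := by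
  induction e with
  | _ x y =>
    rw [SimpleGraph.mem_edgeSet] at he
    obtain ⟨-, h | h⟩ := he
    · rcases h with ⟨v, rfl, rfl⟩ | ⟨q, p, ⟨rfl, rfl⟩ | ⟨t, rfl, rfl⟩ | ⟨rfl, rfl⟩⟩
      · exact Or.inl ⟨v, rfl⟩
      · exact Or.inr ⟨q, p, 0, rfl⟩
      · refine Or.inr ⟨q, p, ?_⟩
        fin_cases t
        · exact ⟨1, rfl⟩
        · exact ⟨2, rfl⟩
        · exact ⟨3, rfl⟩
      · exact Or.inr ⟨q, p, 4, rfl⟩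
    · rcases h with ⟨v, rfl, rfl⟩ | ⟨q, p, ⟨rfl, rfl⟩ | ⟨t, rfl, rfl⟩ | ⟨rfl, rfl⟩⟩
      · exact Or.inl ⟨v, Sym2.eq_swap⟩
      · exact Or.inr ⟨q, p, 0, Sym2.eq_swap⟩
      · refine Or.inr ⟨q, p, ?_⟩
        fin_cases t
        · exact ⟨1, Sym2.eq_swap⟩
        · exact ⟨2, Sym2.eq_swap⟩
        · exact ⟨3, Sym2.eq_swap⟩
      · exact Or.inr ⟨q, p, 4, Sym2.eq_swap⟩

-- ===== decode / counting =====

def decode : V ⊕ (Q G × Fin 3 × Fin 5) → Sym2 (Vtx G) :=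
  Sum.elim (KE G) (fun x => PE G x.1 x.2.1 x.2.2)

lemma decode_inj : Function.Injective (decode G) := by
  rintro (v | ⟨q, p, i⟩) (w | ⟨q', p', i'⟩) h
  · simpa using KE_inj G h
  · exact absurd h (KE_ne_PE G _ _ _ _)
  · exact absurd h.symm (KE_ne_PE G _ _ _ _)
  · obtain ⟨rfl, rfl, rfl⟩ := PE_inj G h; rfl

variable [Fintype V]

noncomputable def Bidx (B : Set (Sym2 (Vtx G))) : Finset (V ⊕ (Q G × Fin 3 × Fin 5)) :=
  Finset.univ.filter (fun x => decode G x ∈ B)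

lemma B_eq_image {B : Set (Sym2 (Vtx G))} (hB : B ⊆ (HG G).edgeSet) :
    B = decode G '' (Bidx G B : Set (V ⊕ (Q G × Fin 3 × Fin 5))) := by
  ext e
  constructor
  · intro he
    rcases edge_cases G (hB he) with ⟨v, rfl⟩ | ⟨q, p, i, rfl⟩
    · exact ⟨Sum.inl v, Finset.mem_coe.mpr (Finset.mem_filter.mpr ⟨Finset.mem_univ _, he⟩), rfl⟩
    · exact ⟨Sum.inr ⟨q, p, i⟩, Finset.mem_coe.mpr (Finset.mem_filter.mpr ⟨Finset.mem_univ _, he⟩), rfl⟩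
  · rintro ⟨x, hx, rfl⟩
    simpa [Bidx] using hx

lemma ncard_B {B : Set (Sym2 (Vtx G))} (hB : B ⊆ (HG G).edgeSet) :
    B.ncard = (Bidx G B).card := by
  nth_rewrite 1 [B_eq_image G hB]
  rw [Set.ncard_image_of_injective _ (decode_inj G), Set.ncard_coe_finset]

noncomputable def Sset (B : Set (Sym2 (Vtx G))) : Finset V :=
  Finset.univ.filter (fun v => KE G v ∈ B)

noncomputable def gsel (B : Set (Sym2 (Vtx G))) (q : Q G) (p : Fin 3) : Finset (Fin 5) :=
  Finset.univ.filter (fun i => PE G q p i ∈ B)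


lemma card_Bidx (B : Set (Sym2 (Vtx G))) :
    (Bidx G B).card = (Sset G B).card + ∑ q : Q G, ∑ p : Fin 3, (gsel G B q p).card := by
  classical
  have : (Bidx G B) =
      (Sset G B).disjSum ((Finset.univ : Finset (Q G × Fin 3 × Fin 5)).filter
        (fun x => PE G x.1 x.2.1 x.2.2 ∈ B)) := by
    ext (v | ⟨q, p, i⟩) <;> simp only [Bidx, Sset, Finset.mem_filter, Finset.mem_univ, true_and,
      Finset.inl_mem_disjSum, Finset.inr_mem_disjSum, Sum.elim_inl, Sum.elim_inr] <;> exact Iff.rfl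
  rw [this, Finset.card_disjSum]
  congr 1
  rw [Finset.card_filter, Fintype.sum_prod_type]
  refine Finset.sum_congr rfl (fun q _ => ?_)
  rw [Fintype.sum_prod_type]
  refine Finset.sum_congr rfl (fun p _ => ?_)
  rw [gsel, Finset.card_filter]

-- ===== simp normal forms =====
lemma PE0_eq (q : Q G) (p : Fin 3) : PE G q p 0 = s(ov G q.1.1 0, rv G q p 0) := rfl
lemma PE1_eq (q : Q G) (p : Fin 3) : PE G q p 1 = s(rv G q p 0, rv G q p 1) := rfl
lemma PE2_eq (q : Q G) (p : Fin 3) : PE G q p 2 = s(rv G q p 1, rv G q p 2) := rfl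
lemma PE3_eq (q : Q G) (p : Fin 3) : PE G q p 3 = s(rv G q p 2, rv G q p 3) := rfl
lemma PE4_eq (q : Q G) (p : Fin 3) : PE G q p 4 = s(rv G q p 3, ov G q.1.2 1) := rfl

lemma adjK (v : V) : (HG G).Adj (ov G v 0) (ov G v 1) :=
  (SimpleGraph.mem_edgeSet (HG G)).mp (KE_mem G v)
lemma adjP0 (q : Q G) (p : Fin 3) : (HG G).Adj (ov G q.1.1 0) (rv G q p 0) :=
  (SimpleGraph.mem_edgeSet (HG G)).mp (PE_mem G q p 0)
lemma adjP1 (q : Q G) (p : Fin 3) : (HG G).Adj (rv G q p 0) (rv G q p 1) :=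
  (SimpleGraph.mem_edgeSet (HG G)).mp (PE_mem G q p 1)
lemma adjP2 (q : Q G) (p : Fin 3) : (HG G).Adj (rv G q p 1) (rv G q p 2) :=
  (SimpleGraph.mem_edgeSet (HG G)).mp (PE_mem G q p 2)
lemma adjP3 (q : Q G) (p : Fin 3) : (HG G).Adj (rv G q p 2) (rv G q p 3) :=
  (SimpleGraph.mem_edgeSet (HG G)).mp (PE_mem G q p 3)
lemma adjP4 (q : Q G) (p : Fin 3) : (HG G).Adj (rv G q p 3) (ov G q.1.2 1) :=
  (SimpleGraph.mem_edgeSet (HG G)).mp (PE_mem G q p 4)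

lemma PE_ne_of_i {q q' : Q G} {p p' : Fin 3} {i i' : Fin 5} (h : i ≠ i') :
    PE G q p i ≠ PE G q' p' i' := fun he => h (PE_inj G he).2.2
lemma PE_ne_of_p {q q' : Q G} {p p' : Fin 3} {i i' : Fin 5} (h : p ≠ p') :
    PE G q p i ≠ PE G q' p' i' := fun he => h (PE_inj G he).2.1

-- ===== EOP constraints =====
variable {G}
variable {B : Set (Sym2 (Vtx G))}

lemma c02 (hB : IsEOP (HG G) B) (q : Q G) (p : Fin 3) :
    ¬(PE G q p 0 ∈ B ∧ PE G q p 2 ∈ B) := by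
  rintro ⟨h0, h2⟩
  exact hB.2 _ h0 _ h2 (PE_ne_of_i G (by decide))
    ⟨rv G q p 0, rv G q p 1, by simp [PE0_eq], by simp [PE2_eq], adjP1 G q p,
     (PE1_eq G q p ▸ PE_ne_of_i G (by decide)),
     (PE1_eq G q p ▸ PE_ne_of_i G (by decide))⟩

lemma c13 (hB : IsEOP (HG G) B) (q : Q G) (p : Fin 3) :
    ¬(PE G q p 1 ∈ B ∧ PE G q p 3 ∈ B) := by
  rintro ⟨h0, h2⟩
  exact hB.2 _ h0 _ h2 (PE_ne_of_i G (by decide))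
    ⟨rv G q p 1, rv G q p 2, by simp [PE1_eq], by simp [PE3_eq], adjP2 G q p,
     (PE2_eq G q p ▸ PE_ne_of_i G (by decide)),
     (PE2_eq G q p ▸ PE_ne_of_i G (by decide))⟩

lemma c24 (hB : IsEOP (HG G) B) (q : Q G) (p : Fin 3) :
    ¬(PE G q p 2 ∈ B ∧ PE G q p 4 ∈ B) := by
  rintro ⟨h0, h2⟩
  exact hB.2 _ h0 _ h2 (PE_ne_of_i G (by decide))
    ⟨rv G q p 2, rv G q p 3, by simp [PE2_eq], by simp [PE4_eq], adjP3 G q p,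
     (PE3_eq G q p ▸ PE_ne_of_i G (by decide)),
     (PE3_eq G q p ▸ PE_ne_of_i G (by decide))⟩

lemma c01 (hB : IsEOP (HG G) B) (q : Q G) {p p' : Fin 3} (hp : p ≠ p') :
    ¬(PE G q p 0 ∈ B ∧ PE G q p' 1 ∈ B) := by
  rintro ⟨h0, h2⟩
  exact hB.2 _ h0 _ h2 (PE_ne_of_i G (by decide))
    ⟨ov G q.1.1 0, rv G q p' 0, by simp [PE0_eq], by simp [PE1_eq], adjP0 G q p',
     (PE0_eq G q p' ▸ PE_ne_of_p G (Ne.symm hp)),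
     (PE0_eq G q p' ▸ PE_ne_of_i G (by decide))⟩

lemma c43 (hB : IsEOP (HG G) B) (q : Q G) {p p' : Fin 3} (hp : p ≠ p') :
    ¬(PE G q p 4 ∈ B ∧ PE G q p' 3 ∈ B) := by
  rintro ⟨h0, h2⟩
  refine hB.2 _ h0 _ h2 (PE_ne_of_i G (by decide))
    ⟨ov G q.1.2 1, rv G q p' 3, by simp [PE4_eq], by simp [PE3_eq], (adjP4 G q p').symm, ?_, ?_⟩
  · rw [Sym2.eq_swap, ← PE4_eq]
    exact PE_ne_of_p G (Ne.symm hp)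
  · rw [Sym2.eq_swap, ← PE4_eq]
    exact PE_ne_of_i G (by decide)

lemma cK1 (hB : IsEOP (HG G) B) (q : Q G) (p : Fin 3) (hK : KE G q.1.1 ∈ B) :
    PE G q p 1 ∉ B := by
  intro h1
  exact hB.2 _ hK _ h1 (KE_ne_PE G _ _ _ _)
    ⟨ov G q.1.1 0, rv G q p 0, by simp [KE], by simp [PE1_eq], adjP0 G q p,
     (PE0_eq G q p ▸ (KE_ne_PE G _ _ _ _).symm.symm).symm ∘ Eq.symm ∘ Eq.symm,
     (PE0_eq G q p ▸ PE_ne_of_i G (by decide))⟩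

lemma cK3 (hB : IsEOP (HG G) B) (q : Q G) (p : Fin 3) (hK : KE G q.1.2 ∈ B) :
    PE G q p 3 ∉ B := by
  intro h1
  refine hB.2 _ hK _ h1 (KE_ne_PE G _ _ _ _)
    ⟨ov G q.1.2 1, rv G q p 3, by simp [KE], by simp [PE3_eq], (adjP4 G q p).symm, ?_, ?_⟩
  · rw [Sym2.eq_swap, ← PE4_eq]
    exact Ne.symm (KE_ne_PE G _ _ _ _)
  · rw [Sym2.eq_swap, ← PE4_eq]
    exact PE_ne_of_i G (by decide)

lemma c04 (hB : IsEOP (HG G) B) {q q' : Q G} (h : q'.1.2 = q.1.1) (p p' : Fin 3) :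
    ¬(PE G q p 0 ∈ B ∧ PE G q' p' 4 ∈ B) := by
  rintro ⟨h0, h2⟩
  refine hB.2 _ h0 _ h2 (PE_ne_of_i G (by decide))
    ⟨ov G q.1.1 0, ov G q'.1.2 1, by simp [PE0_eq], by simp [PE4_eq], ?_, ?_, ?_⟩
  · rw [h]; exact adjK G q.1.1
  · rw [h, ← KE]; exact KE_ne_PE G _ _ _ _
  · rw [h, ← KE]; exact KE_ne_PE G _ _ _ _

-- ===== finite decide lemmas =====
lemma small2 : ∀ s : Finset (Fin 5), 1 ∉ s → 3 ∉ s → ¬(0 ∈ s ∧ 2 ∈ s) → ¬(2 ∈ s ∧ 4 ∈ s) →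
    s.card ≤ 2 ∧ (s.card = 2 → 0 ∈ s ∧ 4 ∈ s) := by decide

lemma d1 : ∀ s : Finset (Fin 5), ¬(0 ∈ s ∧ 2 ∈ s) → ¬(1 ∈ s ∧ 3 ∈ s) → ¬(2 ∈ s ∧ 4 ∈ s) →
    s.card ≤ 3 ∧ (s.card = 3 → 0 ∈ s ∧ 4 ∈ s ∧ (1 ∈ s ∨ 3 ∈ s)) := by decide

lemma d2 : ∀ s : Finset (Fin 5), 1 ∉ s → 3 ∉ s → 0 ∉ s → ¬(2 ∈ s ∧ 4 ∈ s) → s.card ≤ 1 := by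
  decide

lemma d3 : ∀ s : Finset (Fin 5), 1 ∉ s → 3 ∉ s → 4 ∉ s → ¬(0 ∈ s ∧ 2 ∈ s) → s.card ≤ 1 := by
  decide

lemma dir6 (f : Fin 3 → Finset (Fin 5))
    (h1 : ∀ p, ¬(0 ∈ f p ∧ 2 ∈ f p)) (h2 : ∀ p, ¬(1 ∈ f p ∧ 3 ∈ f p))
    (h3 : ∀ p, ¬(2 ∈ f p ∧ 4 ∈ f p))
    (h4 : ∀ p p', p ≠ p' → ¬(0 ∈ f p ∧ 1 ∈ f p'))
    (h5 : ∀ p p', p ≠ p' → ¬(4 ∈ f p ∧ 3 ∈ f p')) :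
    (f 0).card + (f 1).card + (f 2).card ≤ 6 := by
  have hd1 := fun p => d1 (f p) (h1 p) (h2 p) (h3 p)
  by_contra hgt
  push_neg at hgt
  -- some path has card 3
  have h3' : ∃ p, (f p).card = 3 := by
    by_contra hno
    push_neg at hno
    have c0 := (hd1 0).1; have c1 := (hd1 1).1; have c2 := (hd1 2).1
    have n0 := hno 0; have n1 := hno 1; have n2 := hno 2
    omega
  obtain ⟨p, hp3⟩ := h3'
  obtain ⟨h0m, h4m, h13⟩ := (hd1 p).2 hp3
  -- for any other path p', card ≤ 1
  have hsmall : ∀ p', p ≠ p' → (f p').card ≤ 1 := by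
    intro p' hne
    have hn1 : 1 ∉ f p' := fun hm => h4 p p' hne ⟨h0m, hm⟩
    have hn3 : 3 ∉ f p' := fun hm => h5 p p' hne ⟨h4m, hm⟩
    rcases h13 with h1m | h3m
    · have hn0 : 0 ∉ f p' := fun hm => h4 p' p (Ne.symm hne) ⟨hm, h1m⟩
      exact d2 (f p') hn1 hn3 hn0 (h3 p')
    · have hn4 : 4 ∉ f p' := fun hm => h5 p' p (Ne.symm hne) ⟨hm, h3m⟩
      exact d3 (f p') hn1 hn3 hn4 (h1 p')
  fin_cases p
  · have a := hsmall 1 (by decide); have b := hsmall 2 (by decide)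
    have hp3' : (f 0).card = 3 := hp3; omega
  · have a := hsmall 0 (by decide); have b := hsmall 2 (by decide)
    have hp3' : (f 1).card = 3 := hp3; omega
  · have a := hsmall 0 (by decide); have b := hsmall 1 (by decide)
    have hp3' : (f 2).card = 3 := hp3; omega

@[simp] lemma mem_gsel {q : Q G} {p : Fin 3} {i : Fin 5} :
    i ∈ gsel G B q p ↔ PE G q p i ∈ B := by simp [gsel]

variable [Fintype V]

lemma dirbound (hB : IsEOP (HG G) B) (q : Q G) :
    ∑ p : Fin 3, (gsel G B q p).card ≤ 6 := by
  rw [Fin.sum_univ_three]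
  exact dir6 (gsel G B q)
    (fun p => by rw [mem_gsel, mem_gsel]; exact c02 hB q p)
    (fun p => by rw [mem_gsel, mem_gsel]; exact c13 hB q p)
    (fun p => by rw [mem_gsel, mem_gsel]; exact c24 hB q p)
    (fun p p' hne => by rw [mem_gsel, mem_gsel]; exact c01 hB q hne)
    (fun p p' hne => by rw [mem_gsel, mem_gsel]; exact c43 hB q hne)

def qswap : Q G ≃ Q G where
  toFun q := ⟨(q.1.2, q.1.1), q.2.symm⟩
  invFun q := ⟨(q.1.2, q.1.1), q.2.symm⟩
  left_inv q := rfl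
  right_inv q := rfl

lemma pairbound (hB : IsEOP (HG G) B) (q : Q G) :
    (∑ p : Fin 3, (gsel G B q p).card) + (∑ p : Fin 3, (gsel G B (qswap q) p).card) ≤ 12 := by
  have := dirbound hB q
  have := dirbound hB (qswap q)
  omega

lemma pairbound' (hB : IsEOP (HG G) B) (q : Q G)
    (hv : KE G q.1.1 ∈ B) (hw : KE G q.1.2 ∈ B) :
    (∑ p : Fin 3, (gsel G B q p).card) + (∑ p : Fin 3, (gsel G B (qswap q) p).card) ≤ 11 := by
  have h1 : ∀ p, (gsel G B q p).card ≤ 2 ∧ ((gsel G B q p).card = 2 →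
      0 ∈ gsel G B q p ∧ 4 ∈ gsel G B q p) := by
    intro p
    refine small2 _ (by rw [mem_gsel]; exact cK1 hB q p hv)
      (by rw [mem_gsel]; exact cK3 hB q p hw)
      (by rw [mem_gsel, mem_gsel]; exact c02 hB q p)
      (by rw [mem_gsel, mem_gsel]; exact c24 hB q p)
  have h2 : ∀ p, (gsel G B (qswap q) p).card ≤ 2 ∧ ((gsel G B (qswap q) p).card = 2 →
      0 ∈ gsel G B (qswap q) p ∧ 4 ∈ gsel G B (qswap q) p) := by
    intro p
    refine small2 _ (by rw [mem_gsel]; exact cK1 hB (qswap q) p hw)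
      (by rw [mem_gsel]; exact cK3 hB (qswap q) p hv)
      (by rw [mem_gsel, mem_gsel]; exact c02 hB (qswap q) p)
      (by rw [mem_gsel, mem_gsel]; exact c24 hB (qswap q) p)
  by_contra hgt
  push_neg at hgt
  rw [Fin.sum_univ_three, Fin.sum_univ_three] at hgt
  have e0 : (gsel G B q 0).card = 2 := by
    have := (h1 0).1; have := (h1 1).1; have := (h1 2).1
    have := (h2 0).1; have := (h2 1).1; have := (h2 2).1
    omega
  have e1 : (gsel G B (qswap q) 0).card = 2 := by
    have := (h1 0).1; have := (h1 1).1; have := (h1 2).1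
    have := (h2 0).1; have := (h2 1).1; have := (h2 2).1
    omega
  have m0 : PE G q 0 0 ∈ B := mem_gsel.mp ((h1 0).2 e0).1
  have m4 : PE G (qswap q) 0 4 ∈ B := mem_gsel.mp ((h2 0).2 e1).2
  exact c04 hB (rfl) 0 0 ⟨m0, m4⟩

-- ===== deficiency =====
variable (G)

noncomputable def badQ (S : Finset V) : Finset (Q G) :=
  Finset.univ.filter (fun q => q.1.1 ∈ S ∧ q.1.2 ∈ S)

lemma deficiency (S : Finset V) :
    ∃ I : Finset V, I ⊆ S ∧ (∀ a ∈ I, ∀ b ∈ I, ¬ G.Adj a b) ∧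
      2 * S.card ≤ 2 * I.card + (badQ G S).card := by
  generalize hn : (badQ G S).card = n
  induction n using Nat.strong_induction_on generalizing S with
  | _ n ih =>
    rcases Finset.eq_empty_or_nonempty (badQ G S) with hemp | ⟨q, hq⟩
    · refine ⟨S, le_refl S, fun a ha b hb hab => ?_, by omega⟩
      have : (⟨(a, b), hab⟩ : Q G) ∈ badQ G S := by
        simp [badQ, ha, hb]
      simp [hemp] at this
    · simp only [badQ, Finset.mem_filter] at hq
      obtain ⟨-, ha, hb⟩ := hq
      have hne : q.1.1 ≠ q.1.2 := q.2.ne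
      set S' := S.erase q.1.1 with hS'
      have hsub : badQ G S' ⊆ ((badQ G S).erase q).erase (qswap q) := by
        intro q' hq'
        simp only [badQ, Finset.mem_filter, hS', Finset.mem_erase] at hq' ⊢
        obtain ⟨-, ⟨hne1, hm1⟩, hne2, hm2⟩ := hq'
        refine ⟨?_, ?_, Finset.mem_univ _, hm1, hm2⟩
        · intro h; rw [h] at hne2; exact hne2 rfl
        · intro h; rw [h] at hne1; exact hne1 rfl
      have hqmem : q ∈ badQ G S := by simp [badQ, ha, hb]
      have hqsmem : qswap q ∈ (badQ G S).erase q := by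
        refine Finset.mem_erase.mpr ⟨?_, by simp [badQ, qswap, ha, hb]⟩
        intro h
        apply hne
        have := congrArg (fun x : Q G => x.1.1) h
        exact this.symm
      have hcard : (badQ G S').card ≤ n - 2 := by
        calc (badQ G S').card ≤ (((badQ G S).erase q).erase (qswap q)).card :=
              Finset.card_le_card hsub
          _ = (badQ G S).card - 2 := by
              rw [Finset.card_erase_of_mem hqsmem, Finset.card_erase_of_mem hqmem]
              omega
          _ = n - 2 := by rw [hn]
      have hnpos : 2 ≤ n := by
        have : {q, qswap q} ⊆ badQ G S := by
          intro x hx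
          rcases Finset.mem_insert.mp hx with rfl | hx
          · exact hqmem
          · rw [Finset.mem_singleton.mp hx]; exact Finset.mem_of_mem_erase hqsmem
        have h2 : ({q, qswap q} : Finset (Q G)).card = 2 := by
          rw [Finset.card_insert_of_notMem (by simpa using (Finset.mem_erase.mp hqsmem).1.symm)]
          · simp
        calc 2 = ({q, qswap q} : Finset (Q G)).card := h2.symm
          _ ≤ (badQ G S).card := Finset.card_le_card this
          _ = n := hn
      obtain ⟨I, hIsub, hIindep, hIcard⟩ := ih (badQ G S').card (by omega) S' rfl
      refine ⟨I, hIsub.trans (Finset.erase_subset _ _), hIindep, ?_⟩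
      have hScard : S'.card = S.card - 1 := Finset.card_erase_of_mem ha
      have hSpos : 1 ≤ S.card := Finset.card_pos.mpr ⟨_, ha⟩
      omega

-- ===== cardinality of Q =====
def qdart : Q G ≃ G.Dart where
  toFun q := ⟨q.1, q.2⟩
  invFun d := ⟨d.toProd, d.adj⟩
  left_inv q := rfl
  right_inv d := rfl

variable [Fintype V]

lemma card_Q [DecidableEq V] : Fintype.card (Q G) = 2 * G.edgeSet.ncard := by
  classical
  rw [Fintype.card_congr (qdart G), SimpleGraph.dart_card_eq_twice_card_edges]
  congr 1
  rw [← SimpleGraph.coe_edgeFinset, Set.ncard_coe_finset]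

-- ===== indepNum facts =====
lemma indep_bddAbove :
    BddAbove {n | ∃ I : Set V, (∀ a ∈ I, ∀ b ∈ I, ¬ G.Adj a b) ∧ I.ncard = n} := by
  refine ⟨Fintype.card V, fun n ⟨I, _, hcard⟩ => ?_⟩
  rw [← hcard]
  calc I.ncard ≤ (Set.univ : Set V).ncard :=
        Set.ncard_le_ncard (Set.subset_univ I) Set.finite_univ
    _ = Fintype.card V := by rw [Set.ncard_univ, Nat.card_eq_fintype_card]

lemma indep_le_indepNum {I : Set V} (h : ∀ a ∈ I, ∀ b ∈ I, ¬ G.Adj a b) :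
    I.ncard ≤ indepNum G :=
  le_csSup (indep_bddAbove G) ⟨I, h, rfl⟩

lemma exists_indep_eq : ∃ I : Set V, (∀ a ∈ I, ∀ b ∈ I, ¬ G.Adj a b) ∧
    I.ncard = indepNum G := by
  have hne : {n | ∃ I : Set V, (∀ a ∈ I, ∀ b ∈ I, ¬ G.Adj a b) ∧ I.ncard = n}.Nonempty :=
    ⟨0, ∅, by simp, by simp⟩
  have := Nat.sSup_mem hne (indep_bddAbove G)
  exact this

-- ===== upper bound =====
variable {G}

lemma ub {B : Set (Sym2 (Vtx G))} (hB : IsEOP (HG G) B) :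
    B.ncard ≤ 12 * G.edgeSet.ncard + indepNum G := by
  classical
  have hcount : B.ncard = (Sset G B).card + ∑ q : Q G, ∑ p : Fin 3, (gsel G B q p).card := by
    rw [ncard_B G hB.1, card_Bidx]
  set S := Sset G B with hS
  set F : Q G → ℕ := fun q => ∑ p : Fin 3, (gsel G B q p).card with hF
  have hswap : ∑ q : Q G, F (qswap q) = ∑ q : Q G, F q := Equiv.sum_comp qswap F
  have hmemS : ∀ v : V, v ∈ S ↔ KE G v ∈ B := by intro v; simp [hS, Sset]
  have hw : ∀ q : Q G,
      F q + F (qswap q) + (if q.1.1 ∈ S ∧ q.1.2 ∈ S then 1 else 0) ≤ 12 := by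
    intro q
    by_cases hq : q.1.1 ∈ S ∧ q.1.2 ∈ S
    · rw [if_pos hq]
      have := pairbound' hB q ((hmemS _).mp hq.1) ((hmemS _).mp hq.2)
      simp only [hF]
      omega
    · rw [if_neg hq]
      have := pairbound hB q
      simp only [hF]
      omega
  have hsum := Finset.sum_le_sum (fun q (_ : q ∈ Finset.univ) => hw q)
  rw [Finset.sum_add_distrib, Finset.sum_add_distrib, hswap, Finset.sum_boole] at hsum
  have hbad : (Finset.univ.filter fun q : Q G => q.1.1 ∈ S ∧ q.1.2 ∈ S) = badQ G S := rfl
  rw [hbad] at hsum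
  have hconst : ∑ _q : Q G, (12 : ℕ) = 12 * (2 * G.edgeSet.ncard) := by
    rw [Finset.sum_const, Finset.card_univ, card_Q, smul_eq_mul, mul_comm]
  rw [hconst] at hsum
  obtain ⟨I, -, hIindep, hIcard⟩ := deficiency G S
  have hIle : I.card ≤ indepNum G := by
    have : (↑I : Set V).ncard ≤ indepNum G := by
      apply indep_le_indepNum
      intro a ha b hb
      exact hIindep a (by simpa using ha) b (by simpa using hb)
    rwa [Set.ncard_coe_finset] at this
  have hlink : Finset.univ.sum F = ∑ q : Q G, F q := rfl
  push_cast at hsum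
  omega

-- ===== adjacency shape lemmas =====
lemma adj_case {x y : Vtx G} (h : (HG G).Adj x y) :
    (∃ v, s(x, y) = KE G v) ∨ ∃ q p i, s(x, y) = PE G q p i :=
  edge_cases G ((SimpleGraph.mem_edgeSet (HG G)).mpr h)

lemma helperA {v w : V} {i j : Fin 2} (h : (HG G).Adj (ov G v i) (ov G w j)) :
    v = w ∧ s(ov G v i, ov G w j) = KE G v := by
  rcases adj_case h with ⟨v', hs⟩ | ⟨q', p', i', hs⟩
  · have hs' := hs
    rw [KE, Sym2.eq_iff] at hs'
    simp only [ov, Sum.inl.injEq, Prod.mk.injEq] at hs'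
    rcases hs' with ⟨⟨rfl, -⟩, ⟨rfl, -⟩⟩ | ⟨⟨rfl, -⟩, ⟨rfl, -⟩⟩ <;> exact ⟨rfl, hs⟩
  · exfalso
    fin_cases i' <;>
      simp [PE0_eq, PE1_eq, PE2_eq, PE3_eq, PE4_eq, ov, rv, Sym2.eq_iff] at hs

lemma helperB {v : V} {i : Fin 2} {q : Q G} {p : Fin 3} {t : Fin 4}
    (h : (HG G).Adj (ov G v i) (rv G q p t)) :
    (i = 0 ∧ v = q.1.1 ∧ t = 0 ∧ s(ov G v i, rv G q p t) = PE G q p 0) ∨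
    (i = 1 ∧ v = q.1.2 ∧ t = 3 ∧ s(ov G v i, rv G q p t) = PE G q p 4) := by
  rcases adj_case h with ⟨v', hs⟩ | ⟨q', p', i', hs⟩
  · exfalso
    rw [KE, Sym2.eq_iff] at hs
    simp [ov, rv] at hs
  · have hs' := hs
    fin_cases i' <;>
      simp [PE0_eq, PE1_eq, PE2_eq, PE3_eq, PE4_eq, ov, rv, Sym2.eq_iff, Prod.ext_iff] at hs'
    · obtain ⟨⟨rfl, rfl⟩, rfl, rfl, rfl⟩ := hs'
      exact Or.inl ⟨rfl, rfl, rfl, hs⟩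
    · obtain ⟨⟨rfl, rfl⟩, rfl, rfl, rfl⟩ := hs'
      exact Or.inr ⟨rfl, rfl, rfl, hs⟩

lemma helperC {q q' : Q G} {p p' : Fin 3} {t t' : Fin 4}
    (h : (HG G).Adj (rv G q p t) (rv G q' p' t')) :
    q = q' ∧ p = p' ∧
    ((t = 0 ∧ t' = 1 ∧ s(rv G q p t, rv G q' p' t') = PE G q p 1) ∨
     (t = 1 ∧ t' = 0 ∧ s(rv G q p t, rv G q' p' t') = PE G q p 1) ∨
     (t = 1 ∧ t' = 2 ∧ s(rv G q p t, rv G q' p' t') = PE G q p 2) ∨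
     (t = 2 ∧ t' = 1 ∧ s(rv G q p t, rv G q' p' t') = PE G q p 2) ∨
     (t = 2 ∧ t' = 3 ∧ s(rv G q p t, rv G q' p' t') = PE G q p 3) ∨
     (t = 3 ∧ t' = 2 ∧ s(rv G q p t, rv G q' p' t') = PE G q p 3)) := by
  rcases adj_case h with ⟨v', hs⟩ | ⟨q'', p'', i'', hs⟩
  · exfalso
    rw [KE, Sym2.eq_iff] at hs
    simp [ov, rv] at hs
  · have hs' := hs
    fin_cases i'' <;>
      simp [PE0_eq, PE1_eq, PE2_eq, PE3_eq, PE4_eq, ov, rv, Sym2.eq_iff, Prod.ext_iff] at hs'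
    · rcases hs' with ⟨⟨rfl, rfl, rfl⟩, rfl, rfl, rfl⟩ | ⟨⟨rfl, rfl, rfl⟩, rfl, rfl, rfl⟩
      · exact ⟨rfl, rfl, Or.inl ⟨rfl, rfl, hs⟩⟩
      · exact ⟨rfl, rfl, Or.inr (Or.inl ⟨rfl, rfl, hs⟩)⟩
    · rcases hs' with ⟨⟨rfl, rfl, rfl⟩, rfl, rfl, rfl⟩ | ⟨⟨rfl, rfl, rfl⟩, rfl, rfl, rfl⟩
      · exact ⟨rfl, rfl, Or.inr (Or.inr (Or.inl ⟨rfl, rfl, hs⟩))⟩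
      · exact ⟨rfl, rfl, Or.inr (Or.inr (Or.inr (Or.inl ⟨rfl, rfl, hs⟩)))⟩
    · rcases hs' with ⟨⟨rfl, rfl, rfl⟩, rfl, rfl, rfl⟩ | ⟨⟨rfl, rfl, rfl⟩, rfl, rfl, rfl⟩
      · exact ⟨rfl, rfl, Or.inr (Or.inr (Or.inr (Or.inr (Or.inl ⟨rfl, rfl, hs⟩))))⟩
      · exact ⟨rfl, rfl, Or.inr (Or.inr (Or.inr (Or.inr (Or.inr ⟨rfl, rfl, hs⟩))))⟩

-- ===== lower bound construction =====
lemma hce_symm {W : Type*} {H : SimpleGraph W} {e1 e2 : Sym2 W}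
    (h : HasCommonEdge H e1 e2) : HasCommonEdge H e2 e1 := by
  obtain ⟨x, y, hx, hy, ha, h1, h2⟩ := h
  exact ⟨y, x, hy, hx, ha.symm, by rwa [Sym2.eq_swap], by rwa [Sym2.eq_swap]⟩

variable (G) in
def lowB (Iset : Set V) : Set (Sym2 (Vtx G)) :=
  (KE G '' Iset) ∪
    {e | ∃ (q : Q G) (p : Fin 3), e = PE G q p 2 ∨
      (q.1.1 ∉ Iset ∧ e = PE G q p 1) ∨ (q.1.1 ∈ Iset ∧ e = PE G q p 3)}

section bash
variable {Iset : Set V} (hI : ∀ a ∈ Iset, ∀ b ∈ Iset, ¬ G.Adj a b)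

lemma LKK {v w : V} : ¬ HasCommonEdge (HG G) (KE G v) (KE G w) := by
  rintro ⟨x, y, hx, hy, hadj, h1, h2⟩
  rw [KE, Sym2.mem_iff] at hx hy
  rcases hx with rfl | rfl <;> rcases hy with rfl | rfl <;>
    · obtain ⟨rfl, hKeq⟩ := helperA hadj
      exact h1 hKeq

lemma LK1 {v : V} {q : Q G} {p : Fin 3} (hvI : v ∈ Iset) (haI : q.1.1 ∉ Iset) :
    ¬ HasCommonEdge (HG G) (KE G v) (PE G q p 1) := by
  rintro ⟨x, y, hx, hy, hadj, h1, h2⟩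
  rw [KE, Sym2.mem_iff] at hx
  rw [PE1_eq, Sym2.mem_iff] at hy
  rcases hx with rfl | rfl <;> rcases hy with rfl | rfl <;>
    rcases helperB hadj with ⟨hi, hv, ht, hseq⟩ | ⟨hi, hv, ht, hseq⟩ <;>
      first
        | exact haI (hv ▸ hvI)
        | exact absurd ht (by decide)
        | exact absurd hi (by decide)

lemma LK2 {v : V} {q : Q G} {p : Fin 3} :
    ¬ HasCommonEdge (HG G) (KE G v) (PE G q p 2) := by
  rintro ⟨x, y, hx, hy, hadj, h1, h2⟩
  rw [KE, Sym2.mem_iff] at hx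
  rw [PE2_eq, Sym2.mem_iff] at hy
  rcases hx with rfl | rfl <;> rcases hy with rfl | rfl <;>
    rcases helperB hadj with ⟨hi, hv, ht, hseq⟩ | ⟨hi, hv, ht, hseq⟩ <;>
      first
        | exact absurd ht (by decide)
        | exact absurd hi (by decide)

include hI in
lemma LK3 {v : V} {q : Q G} {p : Fin 3} (hvI : v ∈ Iset) (haI : q.1.1 ∈ Iset) :
    ¬ HasCommonEdge (HG G) (KE G v) (PE G q p 3) := by
  rintro ⟨x, y, hx, hy, hadj, h1, h2⟩
  rw [KE, Sym2.mem_iff] at hx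
  rw [PE3_eq, Sym2.mem_iff] at hy
  rcases hx with rfl | rfl <;> rcases hy with rfl | rfl <;>
    rcases helperB hadj with ⟨hi, hv, ht, hseq⟩ | ⟨hi, hv, ht, hseq⟩ <;>
      first
        | exact absurd ht (by decide)
        | exact absurd hi (by decide)
        | exact hI _ haI _ (hv ▸ hvI) q.2


lemma L11 {q1 q2 : Q G} {p1 p2 : Fin 3} (hne : PE G q1 p1 1 ≠ PE G q2 p2 1) :
    ¬ HasCommonEdge (HG G) (PE G q1 p1 1) (PE G q2 p2 1) := by
  rintro ⟨x, y, hx, hy, hadj, h1, h2⟩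
  rw [PE1_eq, Sym2.mem_iff] at hx hy
  rcases hx with rfl | rfl <;> rcases hy with rfl | rfl <;>
    · obtain ⟨rfl, rfl, -⟩ := helperC hadj
      exact hne rfl

lemma L22 {q1 q2 : Q G} {p1 p2 : Fin 3} (hne : PE G q1 p1 2 ≠ PE G q2 p2 2) :
    ¬ HasCommonEdge (HG G) (PE G q1 p1 2) (PE G q2 p2 2) := by
  rintro ⟨x, y, hx, hy, hadj, h1, h2⟩
  rw [PE2_eq, Sym2.mem_iff] at hx hy
  rcases hx with rfl | rfl <;> rcases hy with rfl | rfl <;>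
    · obtain ⟨rfl, rfl, -⟩ := helperC hadj
      exact hne rfl

lemma L33 {q1 q2 : Q G} {p1 p2 : Fin 3} (hne : PE G q1 p1 3 ≠ PE G q2 p2 3) :
    ¬ HasCommonEdge (HG G) (PE G q1 p1 3) (PE G q2 p2 3) := by
  rintro ⟨x, y, hx, hy, hadj, h1, h2⟩
  rw [PE3_eq, Sym2.mem_iff] at hx hy
  rcases hx with rfl | rfl <;> rcases hy with rfl | rfl <;>
    · obtain ⟨rfl, rfl, -⟩ := helperC hadj
      exact hne rfl

lemma L13 {q1 q2 : Q G} {p1 p2 : Fin 3} (ha1 : q1.1.1 ∉ Iset) (ha2 : q2.1.1 ∈ Iset) :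
    ¬ HasCommonEdge (HG G) (PE G q1 p1 1) (PE G q2 p2 3) := by
  rintro ⟨x, y, hx, hy, hadj, h1, h2⟩
  rw [PE1_eq, Sym2.mem_iff] at hx
  rw [PE3_eq, Sym2.mem_iff] at hy
  rcases hx with rfl | rfl <;> rcases hy with rfl | rfl <;>
    · obtain ⟨rfl, rfl, -⟩ := helperC hadj
      exact ha1 ha2

lemma L12 {q1 q2 : Q G} {p1 p2 : Fin 3} :
    ¬ HasCommonEdge (HG G) (PE G q1 p1 1) (PE G q2 p2 2) := by
  rintro ⟨x, y, hx, hy, hadj, h1, h2⟩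
  rw [PE1_eq, Sym2.mem_iff] at hx
  rw [PE2_eq, Sym2.mem_iff] at hy
  rcases hx with rfl | rfl <;> rcases hy with rfl | rfl <;>
    · obtain ⟨rfl, rfl, hd⟩ := helperC hadj
      rcases hd with ⟨ht, ht', hseq⟩ | ⟨ht, ht', hseq⟩ | ⟨ht, ht', hseq⟩ | ⟨ht, ht', hseq⟩ |
        ⟨ht, ht', hseq⟩ | ⟨ht, ht', hseq⟩ <;>
        first
          | exact absurd ht (by decide)
          | exact absurd ht' (by decide)
          | exact h1 hseq
          | exact h2 hseq

lemma L23 {q1 q2 : Q G} {p1 p2 : Fin 3} :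
    ¬ HasCommonEdge (HG G) (PE G q1 p1 2) (PE G q2 p2 3) := by
  rintro ⟨x, y, hx, hy, hadj, h1, h2⟩
  rw [PE2_eq, Sym2.mem_iff] at hx
  rw [PE3_eq, Sym2.mem_iff] at hy
  rcases hx with rfl | rfl <;> rcases hy with rfl | rfl <;>
    · obtain ⟨rfl, rfl, hd⟩ := helperC hadj
      rcases hd with ⟨ht, ht', hseq⟩ | ⟨ht, ht', hseq⟩ | ⟨ht, ht', hseq⟩ | ⟨ht, ht', hseq⟩ |
        ⟨ht, ht', hseq⟩ | ⟨ht, ht', hseq⟩ <;>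
        first
          | exact absurd ht (by decide)
          | exact absurd ht' (by decide)
          | exact h1 hseq
          | exact h2 hseq

end bash

section assemble
variable {Iset : Set V} (hI : ∀ a ∈ Iset, ∀ b ∈ Iset, ¬ G.Adj a b)

include hI in
lemma lowB_eop : IsEOP (HG G) (lowB G Iset) := by
  constructor
  · rintro e (⟨v, -, rfl⟩ | ⟨q, p, rfl | ⟨-, rfl⟩ | ⟨-, rfl⟩⟩)
    · exact KE_mem G v
    · exact PE_mem G q p 2
    · exact PE_mem G q p 1
    · exact PE_mem G q p 3
  · rintro e1 (⟨v, hvI, rfl⟩ | ⟨q1, p1, rfl | ⟨ha1, rfl⟩ | ⟨ha1, rfl⟩⟩)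
      e2 (⟨w, hwI, rfl⟩ | ⟨q2, p2, rfl | ⟨ha2, rfl⟩ | ⟨ha2, rfl⟩⟩) hne hce
    · exact LKK hce
    · exact LK2 hce
    · exact LK1 hvI ha2 hce
    · exact LK3 hI hvI ha2 hce
    · exact LK2 (hce_symm hce)
    · exact L22 hne hce
    · exact L12 (hce_symm hce)
    · exact L23 hce
    · exact LK1 hwI ha1 (hce_symm hce)
    · exact L12 hce
    · exact L11 hne hce
    · exact L13 ha1 ha2 hce
    · exact LK3 hI hwI ha1 (hce_symm hce)
    · exact L23 (hce_symm hce)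
    · exact L13 ha2 ha1 (hce_symm hce)
    · exact L33 hne hce

lemma Sset_lowB : Sset G (lowB G Iset) = Iset.toFinset := by
  ext v
  simp only [Sset, Finset.mem_filter, Finset.mem_univ, true_and, Set.mem_toFinset]
  constructor
  · rintro (⟨w, hwI, heq⟩ | ⟨q, p, heq | ⟨-, heq⟩ | ⟨-, heq⟩⟩)
    · rwa [← KE_inj G heq.symm] at hwI
    all_goals exact absurd heq (KE_ne_PE G _ _ _ _)
  · intro hv
    exact Or.inl ⟨v, hv, rfl⟩

lemma gsel_lowB (q : Q G) (p : Fin 3) : (gsel G (lowB G Iset) q p).card = 2 := by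
  classical
  by_cases haI : q.1.1 ∈ Iset
  · have : gsel G (lowB G Iset) q p = {2, 3} := by
      ext i
      simp only [mem_gsel, Finset.mem_insert, Finset.mem_singleton]
      constructor
      · rintro (⟨w, hwI, heq⟩ | ⟨q', p', heq | ⟨ha', heq⟩ | ⟨ha', heq⟩⟩)
        · exact absurd heq (KE_ne_PE G _ _ _ _)
        · exact Or.inl (PE_inj G heq).2.2
        · obtain ⟨rfl, -, -⟩ := PE_inj G heq
          exact absurd haI ha'
        · exact Or.inr (PE_inj G heq).2.2
      · rintro (rfl | rfl)
        · exact Or.inr ⟨q, p, Or.inl rfl⟩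
        · exact Or.inr ⟨q, p, Or.inr (Or.inr ⟨haI, rfl⟩)⟩
    rw [this]; decide
  · have : gsel G (lowB G Iset) q p = {1, 2} := by
      ext i
      simp only [mem_gsel, Finset.mem_insert, Finset.mem_singleton]
      constructor
      · rintro (⟨w, hwI, heq⟩ | ⟨q', p', heq | ⟨ha', heq⟩ | ⟨ha', heq⟩⟩)
        · exact absurd heq (KE_ne_PE G _ _ _ _)
        · exact Or.inr (PE_inj G heq).2.2
        · exact Or.inl (PE_inj G heq).2.2
        · obtain ⟨rfl, -, -⟩ := PE_inj G heq
          exact absurd ha' haI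
      · rintro (rfl | rfl)
        · exact Or.inr ⟨q, p, Or.inr (Or.inl ⟨haI, rfl⟩)⟩
        · exact Or.inr ⟨q, p, Or.inl rfl⟩
    rw [this]; decide

include hI in
lemma lowB_ncard : (lowB G Iset).ncard = 12 * G.edgeSet.ncard + Iset.ncard := by
  classical
  rw [ncard_B G (lowB_eop hI).1, card_Bidx, Sset_lowB]
  have h2 : ∀ q : Q G, ∑ p : Fin 3, (gsel G (lowB G Iset) q p).card = 6 := by
    intro q
    simp [gsel_lowB]
  rw [Finset.sum_congr rfl (fun q _ => h2 q), Finset.sum_const, Finset.card_univ, card_Q,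
    Set.ncard_eq_toFinset_card' Iset]
  ring
end assemble

-- ===== eopNum facts =====
lemma eop_bddAbove : BddAbove {n | ∃ B : Set (Sym2 (Vtx G)), IsEOP (HG G) B ∧ B.ncard = n} := by
  classical
  refine ⟨Fintype.card (Sym2 (Vtx G)), fun n ⟨B, _, hcard⟩ => ?_⟩
  rw [← hcard]
  calc B.ncard ≤ (Set.univ : Set (Sym2 (Vtx G))).ncard :=
        Set.ncard_le_ncard (Set.subset_univ B) Set.finite_univ
    _ = _ := by rw [Set.ncard_univ, Nat.card_eq_fintype_card]

end EOP14

/-- With `m = |E(G)|`, the graph `H_G` satisfies `ρₑᵒ(H_G) = 12m + α(G)`. -/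
theorem stmt14 [Fintype V] (G : SimpleGraph V) (m : ℕ) (hm : m = G.edgeSet.ncard) :
    eopNum (HG G) = 12 * m + indepNum G := by
  classical
  subst hm
  unfold eopNum
  apply le_antisymm
  · refine csSup_le ⟨0, ∅, ⟨Set.empty_subset _, by
      rintro e he; exact absurd he (Set.notMem_empty e)⟩, by simp⟩ ?_
    rintro n ⟨B, hB, rfl⟩
    exact EOP14.ub hB
  · obtain ⟨Iset, hIindep, hIcard⟩ := EOP14.exists_indep_eq G
    exact le_csSup (EOP14.eop_bddAbove (G := G))
      ⟨EOP14.lowB G Iset, EOP14.lowB_eop hIindep, by rw [EOP14.lowB_ncard hIindep, hIcard]⟩
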